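/- End-point property of the derivative at the left end-point: for every natural number n ≥ 1, real parameters α, β with 0 ≤ α ≤ β, and control points P_0, …, P_n in ℝ^d (or any real normed vector space), the Bézier curve P(t) = ∑_{k=0}^{n} P_k · G_{n,α,β}^k(t) satisfies P′(α/(n+β)) = (n+β) · (P_1 − P_0); in particular the curve is tangent to the first edge of its control polygon at the left end-point. -/

import Mathlib

/-- Bernstein functions with shifted knots of degree `n`:
`G_{n,α,β}^k(t) = C(n,k) ((n+β)/n)^n (t - α/(n+β))^k ((n+α)/(n+β) - t)^(n-k)`. -/
noncomputable def G (n : ℕ) (α β : ℝ) (k : ℕ) (t : ℝ) : ℝ :=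
  (n.choose k : ℝ) * ((n + β) / n) ^ n * (t - α / (n + β)) ^ k *
    ((n + α) / (n + β) - t) ^ (n - k)

/-- End-point property of the derivative at the left end-point: the Bézier curve
with shifted knots is tangent to the first edge of its control polygon. -/
theorem bezier_deriv_left (n : ℕ) (hn : 1 ≤ n) (α β : ℝ) (hα : 0 ≤ α) (hαβ : α ≤ β)
    {E : Type*} [NormedAddCommGroup E] [NormedSpace ℝ E] (P : ℕ → E) :
    HasDerivAt (fun s => ∑ k ∈ Finset.range (n + 1), G n α β k s • P k)
      (((n : ℝ) + β) • (P 1 - P 0)) (α / (n + β)) := by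
  have hn1 : (1 : ℝ) ≤ (n : ℝ) := by exact_mod_cast hn
  have hn0 : (n : ℝ) ≠ 0 := by linarith
  have hnβ : (0 : ℝ) < (n : ℝ) + β := by linarith
  have hnβ0 : (n : ℝ) + β ≠ 0 := ne_of_gt hnβ
  set a : ℝ := α / ((n : ℝ) + β) with ha
  set b : ℝ := ((n : ℝ) + α) / ((n : ℝ) + β) with hbdef
  have hb : b - a = (n : ℝ) / ((n : ℝ) + β) := by
    rw [hbdef, ha, div_sub_div_same]; ring_nf
  have hkey : (((n : ℝ) + β) / n) ^ n * ((n : ℝ) / ((n : ℝ) + β)) ^ (n - 1) * (n : ℝ)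
      = (n : ℝ) + β := by
    have hsplit : (((n : ℝ) + β) / n) ^ n
        = (((n : ℝ) + β) / n) ^ (n - 1) * (((n : ℝ) + β) / n) := by
      rw [← pow_succ, Nat.sub_add_cancel hn]
    rw [hsplit]
    have : (((n : ℝ) + β) / n) ^ (n - 1) * ((n : ℝ) / ((n : ℝ) + β)) ^ (n - 1)
        = 1 := by
      rw [← mul_pow]
      have : ((n : ℝ) + β) / n * ((n : ℝ) / ((n : ℝ) + β)) = 1 := by
        field_simp
      rw [this, one_pow]
    calc (((n : ℝ) + β) / n) ^ (n - 1) * (((n : ℝ) + β) / n) *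
          ((n : ℝ) / ((n : ℝ) + β)) ^ (n - 1) * (n : ℝ)
        = ((((n : ℝ) + β) / n) ^ (n - 1) * ((n : ℝ) / ((n : ℝ) + β)) ^ (n - 1)) *
          ((((n : ℝ) + β) / n) * (n : ℝ)) := by ring
      _ = ((n : ℝ) + β) / n * n := by rw [this, one_mul]
      _ = (n : ℝ) + β := by field_simp
  set e : ℕ → ℝ := fun k =>
    if k = 0 then -((n : ℝ) + β) else if k = 1 then (n : ℝ) + β else 0 with he
  have hterm : ∀ k ∈ Finset.range (n + 1),
      HasDerivAt (fun s => G n α β k s • P k) (e k • P k) a := by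
    intro k _
    have h1 : HasDerivAt (fun s : ℝ => (s - a) ^ k)
        ((k : ℝ) * (a - a) ^ (k - 1) * 1) a :=
      ((hasDerivAt_id a).sub_const a).pow k
    have h2 : HasDerivAt (fun s : ℝ => (b - s) ^ (n - k))
        (((n - k : ℕ) : ℝ) * (b - a) ^ (n - k - 1) * (-1)) a := by
      have := ((hasDerivAt_id a).const_sub b).fun_pow (n - k)
      simpa using this
    have h3 := ((h1.mul h2).const_mul ((n.choose k : ℝ) * (((n : ℝ) + β) / n) ^ n))
    have h4 : HasDerivAt (fun s => G n α β k s)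
        ((n.choose k : ℝ) * (((n : ℝ) + β) / n) ^ n *
          ((k : ℝ) * (a - a) ^ (k - 1) * 1 * (b - a) ^ (n - k) +
            (a - a) ^ k * (((n - k : ℕ) : ℝ) * (b - a) ^ (n - k - 1) * (-1)))) a := by
      convert h3 using 2 with s
      · rfl
      · rfl
      simp [G, ha, hbdef, mul_assoc]
    have h5 := h4.smul_const (P k)
    convert h5 using 2
    rw [he]
    rcases k with _ | _ | k
    · simp only [Nat.choose_zero_right, Nat.cast_one, sub_self, if_pos rfl]
      rw [hb]
      norm_num
      push_cast
      linear_combination hkey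
    · simp only [Nat.choose_one_right, sub_self, if_neg one_ne_zero, if_pos rfl]
      rw [hb]
      norm_num
      push_cast
      linear_combination -hkey
    · simp
  have hsum := HasDerivAt.fun_sum hterm
  have hval : ∑ k ∈ Finset.range (n + 1), e k • P k
      = ((n : ℝ) + β) • (P 1 - P 0) := by
    have hsub : ({0, 1} : Finset ℕ) ⊆ Finset.range (n + 1) := by
      intro x hx
      simp only [Finset.mem_insert, Finset.mem_singleton] at hx
      rcases hx with rfl | rfl <;> simp [Finset.mem_range] <;> omega
    rw [← Finset.sum_subset hsub]
    · rw [Finset.sum_pair (by norm_num : (0:ℕ) ≠ 1)]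
      simp only [he]
      norm_num
      module
    · intro x _ hx
      simp only [Finset.mem_insert, Finset.mem_singleton, not_or] at hx
      simp [he, hx.1, hx.2]
  rw [← hval]
  exact hsum
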